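/- arXiv:1603.04456 — 4 statements merged into one kernel-verified Lean document; each statement's English description precedes it below -/
import Mathlib

section
/- Let H be a real inner product space, and let a : H × H → ℝ be a symmetric bilinear form. Suppose u, u_N ∈ H satisfy ‖u‖ = ‖u_N‖ = 1, and λ, λ_N ∈ ℝ satisfy a(u,u) = λ, a(u_N,u_N) = λ_N, and a(u,u_N) = λ·⟨u,u_N⟩. Then a(u − u_N, u − u_N) = λ_N − λ + λ·‖u − u_N‖². -/
open scoped RealInnerProductSpace

/-- Eigenvalue error identity: for a symmetric bilinear form `a` on a real inner
product space, with normalized `u, u_N`, `a u u = lam`, `a u_N u_N = lamN`, and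
the consistency relation `a u u_N = lam * ⟪u, u_N⟫`, we have
`a (u - u_N) (u - u_N) = lamN - lam + lam * ‖u - u_N‖²`. -/
theorem eigenvalue_error_identity
    {H : Type*} [NormedAddCommGroup H] [InnerProductSpace ℝ H]
    (a : H →ₗ[ℝ] H →ₗ[ℝ] ℝ) (hsym : ∀ v w : H, a v w = a w v)
    (u u_N : H) (lam lamN : ℝ)
    (hu : ‖u‖ = 1) (huN : ‖u_N‖ = 1)
    (hau : a u u = lam) (hauN : a u_N u_N = lamN)
    (hmix : a u u_N = lam * ⟪u, u_N⟫) :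
    a (u - u_N) (u - u_N) = lamN - lam + lam * ‖u - u_N‖ ^ 2 := by
  have hnorm : ‖u - u_N‖ ^ 2 = 2 - 2 * ⟪u, u_N⟫ := by
    rw [← real_inner_self_eq_norm_sq, inner_sub_sub_self, real_inner_self_eq_norm_sq,
      real_inner_self_eq_norm_sq, hu, huN, real_inner_comm u_N u]
    ring
  have h2 : a u_N u = lam * ⟪u, u_N⟫ := by rw [← hsym, hmix]
  simp only [map_sub, LinearMap.sub_apply, hau, hauN, hmix, h2, hnorm]
  ring
end

section
/- Let H be a real inner product space, and let a : H × H → ℝ be a symmetric bilinear form. Suppose u, u_N ∈ H satisfy ‖u‖ = ‖u_N‖ = 1, λ ≥ 0 and λ_N ∈ ℝ satisfy a(u,u) = λ, a(u_N,u_N) = λ_N, and a(u,u_N) = λ·⟨u,u_N⟩. Then |λ_N − λ| ≤ |a(u − u_N, u − u_N)| + λ·‖u − u_N‖². -/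
open scoped RealInnerProductSpace

/-- Basic eigenvalue error estimate:
`|lamN - lam| ≤ |a (u - u_N) (u - u_N)| + lam * ‖u - u_N‖²`. -/
theorem eigenvalue_error_upper_estimate
    {H : Type*} [NormedAddCommGroup H] [InnerProductSpace ℝ H]
    (a : H →ₗ[ℝ] H →ₗ[ℝ] ℝ) (hsym : ∀ v w : H, a v w = a w v)
    (u u_N : H) (lam lamN : ℝ)
    (hu : ‖u‖ = 1) (huN : ‖u_N‖ = 1)
    (hlam : 0 ≤ lam)
    (hau : a u u = lam) (hauN : a u_N u_N = lamN)
    (hmix : a u u_N = lam * ⟪u, u_N⟫) :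
    |lamN - lam| ≤ |a (u - u_N) (u - u_N)| + lam * ‖u - u_N‖ ^ 2 := by
  have hnorm : ‖u - u_N‖ ^ 2 = 2 - 2 * ⟪u, u_N⟫ := by
    rw [← real_inner_self_eq_norm_sq, inner_sub_sub_self, real_inner_self_eq_norm_sq,
      real_inner_self_eq_norm_sq, hu, huN, real_inner_comm u_N u]
    ring
  have hexp : a (u - u_N) (u - u_N) = lam - 2 * (lam * ⟪u, u_N⟫) + lamN := by
    simp only [map_sub, LinearMap.sub_apply, hau, hauN, hmix, hsym u_N u, hmix]
    ring
  have key : lamN - lam = a (u - u_N) (u - u_N) - lam * ‖u - u_N‖ ^ 2 := by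
    rw [hexp, hnorm]; ring
  have h2 : 0 ≤ lam * ‖u - u_N‖ ^ 2 := by positivity
  calc |lamN - lam| = |a (u - u_N) (u - u_N) - lam * ‖u - u_N‖ ^ 2| := by rw [key]
    _ ≤ |a (u - u_N) (u - u_N)| + |lam * ‖u - u_N‖ ^ 2| := abs_sub _ _
    _ = |a (u - u_N) (u - u_N)| + lam * ‖u - u_N‖ ^ 2 := by rw [abs_of_nonneg h2]
end

section
/- Let H be a real inner product space, and let a : H × H → ℝ be a symmetric bilinear form. Suppose u, u_N ∈ H satisfy ‖u‖ = ‖u_N‖ = 1, λ ≥ 0 and λ_N ∈ ℝ satisfy a(u,u) = λ, a(u_N,u_N) = λ_N, and a(u,u_N) = λ·⟨u,u_N⟩. Let E ≥ 0, and assume the coercivity bound a(u − u_N, u − u_N) ≥ (1/2)·E² and that the higher-order term is not dominating, i.e. 2·λ·‖u − u_N‖² < E². Then |λ_N − λ| ≥ (1/2)·E² − λ·‖u − u_N‖². -/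
open scoped RealInnerProductSpace

/-- Abstract core of the a posteriori lower bound for the eigenvalue error:
under the coercivity bound `a (u - u_N) (u - u_N) ≥ E²/2` and assuming the
higher-order term is not dominating (`2·lam·‖u - u_N‖² < E²`), the eigenvalue
error satisfies `|lamN - lam| ≥ E²/2 - lam·‖u - u_N‖²`. -/
theorem eigenvalue_error_lower_bound
    {H : Type*} [NormedAddCommGroup H] [InnerProductSpace ℝ H]
    (a : H →ₗ[ℝ] H →ₗ[ℝ] ℝ) (hsym : ∀ v w : H, a v w = a w v)
    (u u_N : H) (lam lamN : ℝ)
    (hu : ‖u‖ = 1) (huN : ‖u_N‖ = 1)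
    (hlam : 0 ≤ lam)
    (hau : a u u = lam) (hauN : a u_N u_N = lamN)
    (hmix : a u u_N = lam * ⟪u, u_N⟫)
    (E : ℝ) (hE : 0 ≤ E)
    (hcoer : a (u - u_N) (u - u_N) ≥ (1 / 2) * E ^ 2)
    (hhot : 2 * lam * ‖u - u_N‖ ^ 2 < E ^ 2) :
    |lamN - lam| ≥ (1 / 2) * E ^ 2 - lam * ‖u - u_N‖ ^ 2 := by
  have hexp : a (u - u_N) (u - u_N)
      = a u u - 2 * a u u_N + a u_N u_N := by
    simp only [map_sub, LinearMap.sub_apply, hsym u_N u]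
    ring
  have hnorm : ‖u - u_N‖ ^ 2 = 2 - 2 * ⟪u, u_N⟫ := by
    rw [← real_inner_self_eq_norm_sq]
    simp only [inner_sub_sub_self, real_inner_comm u_N u,
      real_inner_self_eq_norm_sq, hu, huN]
    ring
  have key : a (u - u_N) (u - u_N) = lamN - lam + lam * ‖u - u_N‖ ^ 2 := by
    rw [hexp, hau, hauN, hmix, hnorm]; ring
  have h1 : lamN - lam ≥ (1 / 2) * E ^ 2 - lam * ‖u - u_N‖ ^ 2 := by
    rw [key] at hcoer; linarith
  calc |lamN - lam| ≥ lamN - lam := le_abs_self _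
    _ ≥ _ := h1
end

section
/- Let V be a real vector space, B₁ : V × V → ℝ a symmetric positive-semidefinite bilinear form, ℓ : V → ℝ a linear functional, and define B(v,w) = ℓ(v)·ℓ(w) + B₁(v,w); assume B is positive definite, so that (V, B) is a real inner product space. Let W ⊆ V be a finite-dimensional subspace containing an element c with B₁(c,c) = 0 and ℓ(c) ≠ 0, and let P : V → W denote the B-orthogonal projection onto W, characterized by B(P v, w) = B(v, w) for all w ∈ W. Then for every v ∈ V: B₁(v − P v, v − P v) ≤ B₁(v, v) and B(v − P v, v − P v) ≤ B(v, v). -/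
/-- Projection stability: with `B v w = ℓ v * ℓ w + B₁ v w` positive definite,
`W` a finite-dimensional subspace containing an element `c` with `B₁ c c = 0`
and `ℓ c ≠ 0`, and `P` the `B`-orthogonal projection onto `W`, we have
`B₁ (v - P v) (v - P v) ≤ B₁ v v` and `B (v - P v) (v - P v) ≤ B v v`. -/
theorem projection_stability
    {V : Type*} [AddCommGroup V] [Module ℝ V]
    (B₁ : V →ₗ[ℝ] V →ₗ[ℝ] ℝ)
    (hB₁sym : ∀ v w : V, B₁ v w = B₁ w v)
    (hB₁psd : ∀ v : V, 0 ≤ B₁ v v)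
    (ℓ : V →ₗ[ℝ] ℝ)
    (B : V → V → ℝ) (hB : ∀ v w : V, B v w = ℓ v * ℓ w + B₁ v w)
    (hBposdef : ∀ v : V, v ≠ 0 → 0 < B v v)
    (W : Submodule ℝ V) (hWfin : FiniteDimensional ℝ W)
    (c : V) (hcW : c ∈ W) (hc₁ : B₁ c c = 0) (hc₂ : ℓ c ≠ 0)
    (P : V → V) (hPmem : ∀ v : V, P v ∈ W)
    (hPchar : ∀ v : V, ∀ w ∈ W, B (P v) w = B v w) :
    ∀ v : V, B₁ (v - P v) (v - P v) ≤ B₁ v v ∧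
      B (v - P v) (v - P v) ≤ B v v := by
  -- Step 1: since B₁ is PSD and B₁ c c = 0, B₁ x c = 0 for all x.
  have hc0 : ∀ x : V, B₁ x c = 0 := by
    intro x
    rcases eq_or_ne (B₁ x c) 0 with h | h
    · exact h
    exfalso
    have key : ∀ t : ℝ, 0 ≤ B₁ x x + 2 * t * B₁ x c := by
      intro t
      have h1 := hB₁psd (x + t • c)
      have h2 : B₁ (x + t • c) (x + t • c)
          = B₁ x x + 2 * t * B₁ x c + t * t * B₁ c c := by
        simp only [map_add, map_smul, LinearMap.add_apply, LinearMap.smul_apply,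
          smul_eq_mul]
        rw [hB₁sym c x]
        ring
      rw [h2, hc₁] at h1
      linarith
    have hkey := key (-(B₁ x x + 1) / (2 * B₁ x c))
    have h2 : (2 : ℝ) * B₁ x c ≠ 0 := mul_ne_zero two_ne_zero h
    have ht : 2 * (-(B₁ x x + 1) / (2 * B₁ x c)) * B₁ x c = -(B₁ x x + 1) := by
      field_simp
    rw [ht] at hkey
    linarith
  intro v
  -- orthogonality of the error against W
  have heW : ∀ w ∈ W, ℓ (v - P v) * ℓ w + B₁ (v - P v) w = 0 := by
    intro w hw
    have h1 := hPchar v w hw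
    rw [hB, hB] at h1
    simp only [map_sub, LinearMap.sub_apply]
    linarith
  -- ℓ of the error vanishes
  have hℓe : ℓ (v - P v) = 0 := by
    have h1 := heW c hcW
    rw [hc0 (v - P v)] at h1
    have := mul_eq_zero.mp (by linarith : ℓ (v - P v) * ℓ c = 0)
    tauto
  -- hence B₁ (v - P v) (P v) = 0
  have hB₁ep : B₁ (v - P v) (P v) = 0 := by
    have h1 := heW (P v) (hPmem v)
    rw [hℓe] at h1
    linarith
  -- expansion of B₁ v v
  have hexp : B₁ v v = B₁ (v - P v) (v - P v) + 2 * B₁ (v - P v) (P v)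
      + B₁ (P v) (P v) := by
    have hv : v = (v - P v) + P v := by abel
    calc B₁ v v = B₁ ((v - P v) + P v) ((v - P v) + P v) := by rw [← hv]
      _ = _ := by
          simp only [map_add, LinearMap.add_apply]
          rw [hB₁sym (P v) (v - P v)]
          ring
  have hℓv : ℓ v = ℓ (P v) := by
    have : ℓ v - ℓ (P v) = 0 := by rw [← map_sub]; exact hℓe
    linarith
  constructor
  · rw [hexp, hB₁ep]
    have := hB₁psd (P v)
    linarith
  · rw [hB, hB, hℓe, hexp, hB₁ep, hℓv]
    have h1 := hB₁psd (P v)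
    nlinarith [sq_nonneg (ℓ (P v))]
end
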